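/- arXiv:1204.0930 — 3 statements merged into one kernel-verified Lean document; each statement's English description precedes it below -/
import Mathlib

section
/- Let g = z + 3x²y + 3xy³ + y⁵ in ℚ[x,y,z] and let h = y − 6(x+y²)²·g + 8(x+y²)·g³ − (16/5)·g⁵. Then the total degree of h equals 25. -/
open MvPolynomial

private lemma td_mul {σ : Type*} {p q : MvPolynomial σ ℚ} {a b : ℕ}
    (hp : p.totalDegree ≤ a) (hq : q.totalDegree ≤ b) :
    (p * q).totalDegree ≤ a + b :=
  (totalDegree_mul _ _).trans (add_le_add hp hq)

private lemma td_add {σ : Type*} {p q : MvPolynomial σ ℚ} {a : ℕ}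
    (hp : p.totalDegree ≤ a) (hq : q.totalDegree ≤ a) :
    (p + q).totalDegree ≤ a :=
  (totalDegree_add _ _).trans (max_le hp hq)

private lemma td_sub {σ : Type*} {p q : MvPolynomial σ ℚ} {a : ℕ}
    (hp : p.totalDegree ≤ a) (hq : q.totalDegree ≤ a) :
    (p - q).totalDegree ≤ a :=
  (totalDegree_sub _ _).trans (max_le hp hq)

private lemma td_pow {σ : Type*} {p : MvPolynomial σ ℚ} {a n : ℕ}
    (hp : p.totalDegree ≤ a) : (p ^ n).totalDegree ≤ n * a :=
  (totalDegree_pow _ _).trans (by exact Nat.mul_le_mul_left _ hp)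

theorem h_totalDegree_eq_25
    (g h : MvPolynomial (Fin 3) ℚ)
    (hg : g = X 2 + 3 * (X 0) ^ 2 * X 1 + 3 * X 0 * (X 1) ^ 3 + (X 1) ^ 5)
    (hh : h = X 1 - 6 * (X 0 + (X 1) ^ 2) ^ 2 * g + 8 * (X 0 + (X 1) ^ 2) * g ^ 3
        - C (16 / 5 : ℚ) * g ^ 5) :
    h.totalDegree = 25 := by
  have h3 : (3 : MvPolynomial (Fin 3) ℚ) = C 3 := (map_ofNat C 3).symm
  have h6 : (6 : MvPolynomial (Fin 3) ℚ) = C 6 := (map_ofNat C 6).symm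
  have h8 : (8 : MvPolynomial (Fin 3) ℚ) = C 8 := (map_ofNat C 8).symm
  have tdX : ∀ i : Fin 3, (X i : MvPolynomial (Fin 3) ℚ).totalDegree ≤ 1 :=
    fun i => (totalDegree_X i).le
  have tdXp : ∀ (i : Fin 3) (n : ℕ),
      ((X i : MvPolynomial (Fin 3) ℚ) ^ n).totalDegree ≤ n := fun i n =>
    (totalDegree_X_pow i n).le
  have tdC : ∀ a : ℚ, (C a : MvPolynomial (Fin 3) ℚ).totalDegree ≤ 0 :=
    fun a => (totalDegree_C a).le
  have hgd : g.totalDegree ≤ 5 := by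
    subst hg
    refine td_add (td_add (td_add ?_ ?_) ?_) (tdXp 1 5)
    · exact (tdX 2).trans (by norm_num)
    · rw [h3]
      exact (td_mul (td_mul (tdC 3) (tdXp 0 2)) (tdX 1)).trans (by norm_num)
    · rw [h3]
      exact (td_mul (td_mul (tdC 3) (tdX 0)) (tdXp 1 3)).trans (by norm_num)
  have hs : ((X 0 + (X 1) ^ 2 : MvPolynomial (Fin 3) ℚ)).totalDegree ≤ 2 :=
    td_add ((tdX 0).trans one_le_two) (tdXp 1 2)
  have hle : h.totalDegree ≤ 25 := by
    rw [hh]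
    refine td_sub (td_add (td_sub ?_ ?_) ?_) ?_
    · exact (tdX 1).trans (by norm_num)
    · rw [h6]
      exact (td_mul (td_mul (tdC 6) ((td_pow hs : _ ≤ 2*2))) hgd).trans (by norm_num)
    · rw [h8]
      exact (td_mul (td_mul (tdC 8) hs) (td_pow hgd : _ ≤ 3*5)).trans (by norm_num)
    · exact (td_mul (tdC _) (td_pow hgd : _ ≤ 5*5)).trans (by norm_num)
  refine le_antisymm hle ?_
  set f : Fin 3 → Polynomial ℚ := ![0, Polynomial.X, 0] with hf
  have himg : aeval f h =
      Polynomial.X - 6 * Polynomial.X ^ 9 + 8 * Polynomial.X ^ 17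
        - Polynomial.C (16 / 5 : ℚ) * Polynomial.X ^ 25 := by
    subst hh hg
    simp only [map_sub, map_add, map_mul, map_pow, aeval_X, map_ofNat, algHom_C, hf]
    simp [Matrix.cons_val_zero, Matrix.cons_val_one]
    ring
  have hnd : (aeval f h).natDegree = 25 := by
    rw [himg]
    compute_degree!
  have := MvPolynomial.aeval_natDegree_le (n := 1) h le_rfl f (fun i => by
    fin_cases i <;> simp [hf])
  rw [hnd, mul_one] at this
  exact this
end

section
/- Let g = z + 3x²y + 3xy³ + y⁵, f₁ = x + y² − g², and h = y − 6(x+y²)²g + 8(x+y²)g³ − (16/5)g⁵ in ℚ[x,y,z]. Then the partial derivative cross terms satisfy: ∂f₁/∂x·∂h/∂y − ∂f₁/∂y·∂h/∂x has total degree at most 6, ∂f₁/∂x·∂h/∂z − ∂f₁/∂z·∂h/∂x has total degree at most 6, and ∂f₁/∂y·∂h/∂z − ∂f₁/∂z·∂h/∂y has total degree at most 6; hence the Poisson bracket [f₁,h], each of whose summands is such a 2×2 Jacobian minor multiplied by an element of degree 2, has degree at most 8, which is strictly less than min(deg f₁, deg h) = min(10, 25). -/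
open MvPolynomial

private lemma pderiv_ofNat (i : Fin 3) (n : ℕ) [n.AtLeastTwo] :
    pderiv i (no_index (OfNat.ofNat n) : MvPolynomial (Fin 3) ℚ) = 0 := by
  rw [(Nat.cast_ofNat (R := MvPolynomial (Fin 3) ℚ) (n := n)).symm]
  exact (pderiv i).map_natCast _

private lemma aeval_totalDegree_le {σ : Type*} (φ : σ → MvPolynomial σ ℚ)
    (hφ : ∀ i, (φ i).totalDegree ≤ 1) (p : MvPolynomial σ ℚ) :
    (aeval φ p).totalDegree ≤ p.totalDegree := by
  conv_lhs => rw [p.as_sum]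
  rw [map_sum]
  refine totalDegree_finsetSum_le fun m hm => ?_
  rw [aeval_monomial, Finsupp.prod]
  refine (totalDegree_mul _ _).trans ?_
  rw [algebraMap_eq, totalDegree_C, zero_add]
  refine le_trans ?_ (le_totalDegree hm)
  refine (totalDegree_finset_prod _ _).trans ?_
  calc ∑ i ∈ m.support, ((φ i) ^ m i).totalDegree
      ≤ ∑ i ∈ m.support, m i * 1 := Finset.sum_le_sum fun i _ =>
        (totalDegree_pow _ _).trans (Nat.mul_le_mul_left _ (hφ i))
    _ = m.sum fun _ k => k := by simp [Finsupp.sum]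

private lemma mon_deg (c : ℚ) (a b d : ℕ) :
    (C c * X 0 ^ a * X 1 ^ b * X 2 ^ d : MvPolynomial (Fin 3) ℚ).totalDegree ≤ a + b + d := by
  refine (totalDegree_mul _ _).trans (le_trans (add_le_add ((totalDegree_mul _ _).trans
    (add_le_add ((totalDegree_mul _ _).trans
    (add_le_add (le_of_eq (totalDegree_C c)) (totalDegree_X_pow 0 a).le))
    (totalDegree_X_pow 1 b).le)) (totalDegree_X_pow 2 d).le) ?_)
  simp

set_option maxHeartbeats 4000000 in
theorem poisson_bracket_bound
    (g f₁ h : MvPolynomial (Fin 3) ℚ)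
    (hg : g = X 2 + 3 * (X 0) ^ 2 * X 1 + 3 * X 0 * (X 1) ^ 3 + (X 1) ^ 5)
    (hf₁ : f₁ = X 0 + (X 1) ^ 2 - g ^ 2)
    (hh : h = X 1 - 6 * (X 0 + (X 1) ^ 2) ^ 2 * g + 8 * (X 0 + (X 1) ^ 2) * g ^ 3
        - C (16 / 5 : ℚ) * g ^ 5) :
    (pderiv 0 f₁ * pderiv 1 h - pderiv 1 f₁ * pderiv 0 h).totalDegree ≤ 6 ∧
    (pderiv 0 f₁ * pderiv 2 h - pderiv 2 f₁ * pderiv 0 h).totalDegree ≤ 6 ∧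
    (pderiv 1 f₁ * pderiv 2 h - pderiv 2 f₁ * pderiv 1 h).totalDegree ≤ 6 ∧
    (∀ u₁ u₂ u₃ : MvPolynomial (Fin 3) ℚ,
      u₁.totalDegree ≤ 2 → u₂.totalDegree ≤ 2 → u₃.totalDegree ≤ 2 →
      ((pderiv 0 f₁ * pderiv 1 h - pderiv 1 f₁ * pderiv 0 h) * u₁ +
       (pderiv 0 f₁ * pderiv 2 h - pderiv 2 f₁ * pderiv 0 h) * u₂ +
       (pderiv 1 f₁ * pderiv 2 h - pderiv 2 f₁ * pderiv 1 h) * u₃).totalDegree ≤ 8) ∧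
    8 < min f₁.totalDegree h.totalDegree := by
  have hC : (C (16/5 : ℚ) : MvPolynomial (Fin 3) ℚ) * 5 = 16 := by
    rw [← map_ofNat (C : ℚ →+* MvPolynomial (Fin 3) ℚ) 5,
        ← map_ofNat (C : ℚ →+* MvPolynomial (Fin 3) ℚ) 16, ← C_mul]
    norm_num
  have h5 : (5 : MvPolynomial (Fin 3) ℚ) ≠ 0 := by norm_num
  have e5 : (C (5:ℚ) : MvPolynomial (Fin 3) ℚ) = 5 := map_ofNat _ 5
  have hH' : (5 : MvPolynomial (Fin 3) ℚ) * h = 5 * X 1 - 30 * (X 0 + (X 1) ^ 2) ^ 2 * g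
      + 40 * (X 0 + (X 1) ^ 2) * g ^ 3 - 16 * g ^ 5 := by
    rw [hh]; linear_combination (-(g ^ 5)) * hC
  have key : ∀ i : Fin 3, (5 : MvPolynomial (Fin 3) ℚ) * pderiv i h = pderiv i (5 * X 1
      - 30 * (X 0 + (X 1) ^ 2) ^ 2 * g + 40 * (X 0 + (X 1) ^ 2) * g ^ 3 - 16 * g ^ 5) := by
    intro i; rw [← e5, ← pderiv_C_mul, e5, hH']
  have c1 : (C (1:ℚ) : MvPolynomial (Fin 3) ℚ) = 1 := map_one _
  have c2 : (C (2:ℚ) : MvPolynomial (Fin 3) ℚ) = 2 := map_ofNat _ 2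
  have c6 : (C (-6:ℚ) : MvPolynomial (Fin 3) ℚ) = -6 := by rw [map_neg, map_ofNat]
  have c10 : (C (-10:ℚ) : MvPolynomial (Fin 3) ℚ) = -10 := by rw [map_neg, map_ofNat]
  have c12 : (C (-12:ℚ) : MvPolynomial (Fin 3) ℚ) = -12 := by rw [map_neg, map_ofNat]
  have c18 : (C (-18:ℚ) : MvPolynomial (Fin 3) ℚ) = -18 := by rw [map_neg, map_ofNat]
  have c30 : (C (-30:ℚ) : MvPolynomial (Fin 3) ℚ) = -30 := by rw [map_neg, map_ofNat]
  have c54 : (C (-54:ℚ) : MvPolynomial (Fin 3) ℚ) = -54 := by rw [map_neg, map_ofNat]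
  subst hg
  have d01 : pderiv 0 f₁ * pderiv 1 h - pderiv 1 f₁ * pderiv 0 h =
      C (1:ℚ) * X 0 ^ 0 * X 1 ^ 0 * X 2 ^ 0 + C (-6:ℚ) * X 0 ^ 0 * X 1 ^ 3 * X 2 ^ 1
      + C (-12:ℚ) * X 0 ^ 1 * X 1 ^ 1 * X 2 ^ 1 + C (-30:ℚ) * X 0 ^ 2 * X 1 ^ 4 * X 2 ^ 0
      + C (-54:ℚ) * X 0 ^ 3 * X 1 ^ 2 * X 2 ^ 0 + C (-18:ℚ) * X 0 ^ 4 * X 1 ^ 0 * X 2 ^ 0 := by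
    apply mul_left_cancel₀ h5
    have e : (5 : MvPolynomial (Fin 3) ℚ)
          * (pderiv 0 f₁ * pderiv 1 h - pderiv 1 f₁ * pderiv 0 h)
        = pderiv 0 f₁ * (5 * pderiv 1 h) - pderiv 1 f₁ * (5 * pderiv 0 h) := by ring
    rw [e, key 0, key 1, hf₁, c1, c6, c12, c30, c54, c18]
    simp only [map_ofNat, map_neg, map_add, map_sub, map_mul, pderiv_mul, pderiv_pow,
      pderiv_C, pderiv_C_mul, pderiv_ofNat, pderiv_X_self,
      pderiv_X_of_ne (by decide : (0:Fin 3) ≠ 1), pderiv_X_of_ne (by decide : (1:Fin 3) ≠ 0),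
      pderiv_X_of_ne (by decide : (2:Fin 3) ≠ 0), pderiv_X_of_ne (by decide : (2:Fin 3) ≠ 1),
      pderiv_X_of_ne (by decide : (0:Fin 3) ≠ 2), pderiv_X_of_ne (by decide : (1:Fin 3) ≠ 2)]
    push_cast
    ring
  have d02 : pderiv 0 f₁ * pderiv 2 h - pderiv 2 f₁ * pderiv 0 h =
      C (-6:ℚ) * X 0 ^ 0 * X 1 ^ 4 * X 2 ^ 0 + C (-12:ℚ) * X 0 ^ 1 * X 1 ^ 2 * X 2 ^ 0
      + C (-6:ℚ) * X 0 ^ 2 * X 1 ^ 0 * X 2 ^ 0 := by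
    apply mul_left_cancel₀ h5
    have e : (5 : MvPolynomial (Fin 3) ℚ)
          * (pderiv 0 f₁ * pderiv 2 h - pderiv 2 f₁ * pderiv 0 h)
        = pderiv 0 f₁ * (5 * pderiv 2 h) - pderiv 2 f₁ * (5 * pderiv 0 h) := by ring
    rw [e, key 0, key 2, hf₁, c6, c12]
    simp only [map_ofNat, map_neg, map_add, map_sub, map_mul, pderiv_mul, pderiv_pow,
      pderiv_C, pderiv_C_mul, pderiv_ofNat, pderiv_X_self,
      pderiv_X_of_ne (by decide : (0:Fin 3) ≠ 1), pderiv_X_of_ne (by decide : (1:Fin 3) ≠ 0),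
      pderiv_X_of_ne (by decide : (2:Fin 3) ≠ 0), pderiv_X_of_ne (by decide : (2:Fin 3) ≠ 1),
      pderiv_X_of_ne (by decide : (0:Fin 3) ≠ 2), pderiv_X_of_ne (by decide : (1:Fin 3) ≠ 2)]
    push_cast
    ring
  have d12 : pderiv 1 f₁ * pderiv 2 h - pderiv 2 f₁ * pderiv 1 h =
      C (2:ℚ) * X 0 ^ 0 * X 1 ^ 0 * X 2 ^ 1 + C (-10:ℚ) * X 0 ^ 0 * X 1 ^ 5 * X 2 ^ 0
      + C (-18:ℚ) * X 0 ^ 1 * X 1 ^ 3 * X 2 ^ 0 + C (-6:ℚ) * X 0 ^ 2 * X 1 ^ 1 * X 2 ^ 0 := by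
    apply mul_left_cancel₀ h5
    have e : (5 : MvPolynomial (Fin 3) ℚ)
          * (pderiv 1 f₁ * pderiv 2 h - pderiv 2 f₁ * pderiv 1 h)
        = pderiv 1 f₁ * (5 * pderiv 2 h) - pderiv 2 f₁ * (5 * pderiv 1 h) := by ring
    rw [e, key 1, key 2, hf₁, c2, c10, c18, c6]
    simp only [map_ofNat, map_neg, map_add, map_sub, map_mul, pderiv_mul, pderiv_pow,
      pderiv_C, pderiv_C_mul, pderiv_ofNat, pderiv_X_self,
      pderiv_X_of_ne (by decide : (0:Fin 3) ≠ 1), pderiv_X_of_ne (by decide : (1:Fin 3) ≠ 0),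
      pderiv_X_of_ne (by decide : (2:Fin 3) ≠ 0), pderiv_X_of_ne (by decide : (2:Fin 3) ≠ 1),
      pderiv_X_of_ne (by decide : (0:Fin 3) ≠ 2), pderiv_X_of_ne (by decide : (1:Fin 3) ≠ 2)]
    push_cast
    ring
  have b01 : (pderiv 0 f₁ * pderiv 1 h - pderiv 1 f₁ * pderiv 0 h).totalDegree ≤ 6 := by
    rw [d01]
    repeat first
      | with_reducible exact le_trans (mon_deg _ _ _ _) (by norm_num)
      | with_reducible refine (totalDegree_add _ _).trans (max_le ?_ ?_)
  have b02 : (pderiv 0 f₁ * pderiv 2 h - pderiv 2 f₁ * pderiv 0 h).totalDegree ≤ 6 := by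
    rw [d02]
    repeat first
      | with_reducible exact le_trans (mon_deg _ _ _ _) (by norm_num)
      | with_reducible refine (totalDegree_add _ _).trans (max_le ?_ ?_)
  have b12 : (pderiv 1 f₁ * pderiv 2 h - pderiv 2 f₁ * pderiv 1 h).totalDegree ≤ 6 := by
    rw [d12]
    repeat first
      | with_reducible exact le_trans (mon_deg _ _ _ _) (by norm_num)
      | with_reducible refine (totalDegree_add _ _).trans (max_le ?_ ?_)
  refine ⟨b01, b02, b12, ?_, ?_⟩
  · intro u₁ u₂ u₃ hu₁ hu₂ hu₃
    refine (totalDegree_add _ _).trans (max_le ((totalDegree_add _ _).trans (max_le ?_ ?_)) ?_)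
    · exact (totalDegree_mul _ _).trans ((add_le_add b01 hu₁).trans (by norm_num))
    · exact (totalDegree_mul _ _).trans ((add_le_add b02 hu₂).trans (by norm_num))
    · exact (totalDegree_mul _ _).trans ((add_le_add b12 hu₃).trans (by norm_num))
  · -- lower bounds via the substitution x ↦ 0, y ↦ y, z ↦ 0
    set φ : Fin 3 → MvPolynomial (Fin 3) ℚ := ![0, X 1, 0] with hφdef
    have hφ : ∀ i, (φ i).totalDegree ≤ 1 := by
      intro i; fin_cases i <;> simp [hφdef, totalDegree_X]
    have haf : aeval φ f₁ = X 1 ^ 2 - X 1 ^ 10 := by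
      rw [hf₁]
      simp only [map_add, map_sub, map_mul, map_pow, map_ofNat, aeval_X, hφdef,
        Matrix.cons_val_zero, Matrix.cons_val_one, Matrix.head_cons, Matrix.cons_val_two,
        Matrix.tail_cons]
      ring
    have hah : aeval φ h = X 1 - 6 * X 1 ^ 9 + 8 * X 1 ^ 17 - C (16/5 : ℚ) * X 1 ^ 25 := by
      rw [hh]
      simp only [map_add, map_sub, map_mul, map_pow, map_ofNat, aeval_X, aeval_C, algebraMap_eq,
        hφdef, Matrix.cons_val_zero, Matrix.cons_val_one, Matrix.head_cons, Matrix.cons_val_two,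
        Matrix.tail_cons]
      ring
    have lf : 10 ≤ (aeval φ f₁).totalDegree := by
      rw [haf]
      have hc : coeff (Finsupp.single (1 : Fin 3) 10)
          ((X 1 : MvPolynomial (Fin 3) ℚ) ^ 2 - X 1 ^ 10) ≠ 0 := by
        simp [coeff_sub, coeff_X_pow, Finsupp.single_eq_single_iff]
      have := le_totalDegree (p := (X 1 : MvPolynomial (Fin 3) ℚ) ^ 2 - X 1 ^ 10)
        (s := Finsupp.single (1 : Fin 3) 10) (by simpa [mem_support_iff] using hc)
      simpa using this
    have lh : 25 ≤ (aeval φ h).totalDegree := by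
      rw [hah]
      have hc : coeff (Finsupp.single (1 : Fin 3) 25)
          ((X 1 : MvPolynomial (Fin 3) ℚ) - 6 * X 1 ^ 9 + 8 * X 1 ^ 17
            - C (16/5 : ℚ) * X 1 ^ 25) ≠ 0 := by
        have h6 : (6 : MvPolynomial (Fin 3) ℚ) = C (6:ℚ) := (map_ofNat _ 6).symm
        have h8 : (8 : MvPolynomial (Fin 3) ℚ) = C (8:ℚ) := (map_ofNat _ 8).symm
        rw [h6, h8]
        simp [coeff_sub, coeff_add, coeff_C_mul, coeff_X_pow, coeff_X',
          Finsupp.single_eq_single_iff]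
      have := le_totalDegree (p := (X 1 : MvPolynomial (Fin 3) ℚ) - 6 * X 1 ^ 9 + 8 * X 1 ^ 17
            - C (16/5 : ℚ) * X 1 ^ 25)
        (s := Finsupp.single (1 : Fin 3) 25) (by simpa [mem_support_iff] using hc)
      simpa using this
    have Lf : 10 ≤ f₁.totalDegree := lf.trans (aeval_totalDegree_le φ hφ f₁)
    have Lh : 25 ≤ h.totalDegree := lh.trans (aeval_totalDegree_le φ hφ h)
    exact lt_min (by omega) (by omega)
end

section
/- Let g = z + 3x²y + 3xy³ + y⁵, f₁ = x + y² − g², and h = y − 6(x+y²)²g + 8(x+y²)g³ − (16/5)g⁵ in ℚ[x,y,z]. Then f₁ and h are algebraically independent over ℚ. -/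
open MvPolynomial

noncomputable def φ₁aux : MvPolynomial (Fin 3) ℚ →ₐ[ℚ] MvPolynomial (Fin 3) ℚ :=
  aeval ![X 0, X 1, -(3 * (X 0) ^ 2 * X 1 + 3 * X 0 * (X 1) ^ 3 + (X 1) ^ 5)]

noncomputable def φ₂aux : MvPolynomial (Fin 3) ℚ →ₐ[ℚ] MvPolynomial (Fin 3) ℚ :=
  aeval ![X 0 - (X 1) ^ 2, X 1, X 2]

theorem f1_h_algebraicallyIndependent
    (g f₁ h : MvPolynomial (Fin 3) ℚ)
    (hg : g = X 2 + 3 * (X 0) ^ 2 * X 1 + 3 * X 0 * (X 1) ^ 3 + (X 1) ^ 5)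
    (hf₁ : f₁ = X 0 + (X 1) ^ 2 - g ^ 2)
    (hh : h = X 1 - 6 * (X 0 + (X 1) ^ 2) ^ 2 * g + 8 * (X 0 + (X 1) ^ 2) * g ^ 3
        - C (16 / 5 : ℚ) * g ^ 5) :
    AlgebraicIndependent ℚ ![f₁, h] := by
  apply AlgebraicIndependent.of_comp (φ₂aux.comp φ₁aux)
  have hφg : φ₁aux g = 0 := by
    rw [hg]
    simp only [φ₁aux, map_add, map_mul, map_pow, map_ofNat, aeval_X,
      Matrix.cons_val_zero, Matrix.cons_val_one, Matrix.head_cons,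
      Matrix.cons_val_two, Matrix.tail_cons]
    ring
  have hφf : φ₁aux f₁ = X 0 + (X 1) ^ 2 := by
    rw [hf₁]
    simp only [map_sub, map_add, map_pow, hφg]
    simp [φ₁aux]
  have hφh : φ₁aux h = X 1 := by
    rw [hh]
    simp only [map_sub, map_add, map_mul, map_pow, hφg]
    simp [φ₁aux]
  have key : (φ₂aux.comp φ₁aux) ∘ ![f₁, h] = ![X 0, X 1] := by
    funext i
    fin_cases i
    · show (φ₂aux.comp φ₁aux) f₁ = X 0
      rw [AlgHom.comp_apply, hφf, map_add, map_pow]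
      simp only [φ₂aux, aeval_X, Matrix.cons_val_zero, Matrix.cons_val_one, Matrix.head_cons]
      ring
    · show (φ₂aux.comp φ₁aux) h = X 1
      rw [AlgHom.comp_apply, hφh]
      simp [φ₂aux]
  rw [key]
  have := (MvPolynomial.algebraicIndependent_X (Fin 3) ℚ).comp
    (fun i : Fin 2 => (Fin.castSucc i : Fin 3)) (by decide)
  convert this using 1
  funext i
  fin_cases i <;> rfl
end
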